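/- Let A ∈ ℂ^{m×m}, B ∈ ℂ^{n×n} be complex matrices viewed as quaternion matrices, and C = C₁ + C₂·j with C₁, C₂ complex. A quaternion matrix X = X₁ + X₂·j satisfies X - A X^i B = C (where X^i = X₁ - X₂j) if and only if X₁ - AX₁B = C₁ and X₂ + A X₂ conj(B) = C₂. -/

import Mathlib

open Quaternion

noncomputable def qi : ℍ[ℝ] := ⟨0, 1, 0, 0⟩
noncomputable def qj : ℍ[ℝ] := ⟨0, 0, 1, 0⟩

/-- The embedding of `ℂ` into `ℍ[ℝ]` as the span of `1` and `i`. -/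
noncomputable def cq (z : ℂ) : ℍ[ℝ] := ⟨z.re, z.im, 0, 0⟩

/-- A complex matrix viewed as a quaternion matrix. -/
noncomputable def cmap {m n : ℕ} (M : Matrix (Fin m) (Fin n) ℂ) :
    Matrix (Fin m) (Fin n) ℍ[ℝ] := M.map cq

/-- Entrywise application of the involutive automorphism `h ↦ -ihi`. -/
noncomputable def phiM {m n : ℕ} (M : Matrix (Fin m) (Fin n) ℍ[ℝ]) :
    Matrix (Fin m) (Fin n) ℍ[ℝ] := M.map fun h => -(qi * h * qi)

/-- Entrywise right multiplication by `j`. -/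
noncomputable def jmul {m n : ℕ} (M : Matrix (Fin m) (Fin n) ℍ[ℝ]) :
    Matrix (Fin m) (Fin n) ℍ[ℝ] := M.map fun h => h * qj

lemma cq_add (z w : ℂ) : cq (z + w) = cq z + cq w := by
  apply QuaternionAlgebra.ext <;> simp only [Quaternion.re_add, Quaternion.imI_add, Quaternion.imJ_add, Quaternion.imK_add, Quaternion.re_sub, Quaternion.imI_sub, Quaternion.imJ_sub, Quaternion.imK_sub, Quaternion.re_mul, Quaternion.imI_mul, Quaternion.imJ_mul, Quaternion.imK_mul, Quaternion.re_neg, Quaternion.imI_neg, Quaternion.imJ_neg, Quaternion.imK_neg] <;> simp [cq]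

lemma cq_sub (z w : ℂ) : cq (z - w) = cq z - cq w := by
  apply QuaternionAlgebra.ext <;> simp only [Quaternion.re_add, Quaternion.imI_add, Quaternion.imJ_add, Quaternion.imK_add, Quaternion.re_sub, Quaternion.imI_sub, Quaternion.imJ_sub, Quaternion.imK_sub, Quaternion.re_mul, Quaternion.imI_mul, Quaternion.imJ_mul, Quaternion.imK_mul, Quaternion.re_neg, Quaternion.imI_neg, Quaternion.imJ_neg, Quaternion.imK_neg] <;> simp [cq]

lemma cq_mul (z w : ℂ) : cq (z * w) = cq z * cq w := by
  apply QuaternionAlgebra.ext <;> simp only [Quaternion.re_add, Quaternion.imI_add, Quaternion.imJ_add, Quaternion.imK_add, Quaternion.re_sub, Quaternion.imI_sub, Quaternion.imJ_sub, Quaternion.imK_sub, Quaternion.re_mul, Quaternion.imI_mul, Quaternion.imJ_mul, Quaternion.imK_mul, Quaternion.re_neg, Quaternion.imI_neg, Quaternion.imJ_neg, Quaternion.imK_neg] <;> simp [cq, Complex.mul_re, Complex.mul_im]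

noncomputable def cqHom : ℂ →+* ℍ[ℝ] where
  toFun := cq
  map_one' := by unfold cq; apply QuaternionAlgebra.ext <;> simp
  map_mul' := cq_mul
  map_zero' := by unfold cq; apply QuaternionAlgebra.ext <;> simp
  map_add' := cq_add

lemma cmap_mul {m n p : ℕ} (M : Matrix (Fin m) (Fin n) ℂ) (N : Matrix (Fin n) (Fin p) ℂ) :
    cmap (M * N) = cmap M * cmap N := by
  refine Matrix.ext fun i k => ?_
  simp only [cmap, Matrix.mul_apply, Matrix.map_apply]
  rw [show cq = ⇑cqHom from rfl, map_sum]
  exact Finset.sum_congr rfl fun j _ => cq_mul _ _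

lemma qj_mul_cq (z : ℂ) : qj * cq z = cq (starRingEnd ℂ z) * qj := by
  apply QuaternionAlgebra.ext <;> simp only [Quaternion.re_add, Quaternion.imI_add, Quaternion.imJ_add, Quaternion.imK_add, Quaternion.re_sub, Quaternion.imI_sub, Quaternion.imJ_sub, Quaternion.imK_sub, Quaternion.re_mul, Quaternion.imI_mul, Quaternion.imJ_mul, Quaternion.imK_mul, Quaternion.re_neg, Quaternion.imI_neg, Quaternion.imJ_neg, Quaternion.imK_neg] <;> simp [cq, qj]

lemma cq_qj_mul_cq (z w : ℂ) : (cq z * qj) * cq w = cq (z * starRingEnd ℂ w) * qj := by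
  rw [mul_assoc, qj_mul_cq, ← mul_assoc, ← cq_mul]

lemma phi_cq (z : ℂ) : -(qi * cq z * qi) = cq z := by
  apply QuaternionAlgebra.ext <;> simp only [Quaternion.re_add, Quaternion.imI_add, Quaternion.imJ_add, Quaternion.imK_add, Quaternion.re_sub, Quaternion.imI_sub, Quaternion.imJ_sub, Quaternion.imK_sub, Quaternion.re_mul, Quaternion.imI_mul, Quaternion.imJ_mul, Quaternion.imK_mul, Quaternion.re_neg, Quaternion.imI_neg, Quaternion.imJ_neg, Quaternion.imK_neg] <;> simp [cq, qi]

lemma phi_cq_qj (z : ℂ) : -(qi * (cq z * qj) * qi) = -(cq z * qj) := by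
  apply QuaternionAlgebra.ext <;> simp only [Quaternion.re_add, Quaternion.imI_add, Quaternion.imJ_add, Quaternion.imK_add, Quaternion.re_sub, Quaternion.imI_sub, Quaternion.imJ_sub, Quaternion.imK_sub, Quaternion.re_mul, Quaternion.imI_mul, Quaternion.imJ_mul, Quaternion.imK_mul, Quaternion.re_neg, Quaternion.imI_neg, Quaternion.imJ_neg, Quaternion.imK_neg] <;> simp [cq, qi, qj]

lemma phiM_split {m n : ℕ} (P Q : Matrix (Fin m) (Fin n) ℂ) :
    phiM (cmap P + jmul (cmap Q)) = cmap P - jmul (cmap Q) := by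
  refine Matrix.ext fun i k => ?_
  simp only [phiM, cmap, jmul, Matrix.map_apply, Matrix.add_apply, Matrix.sub_apply, mul_add,
    add_mul, neg_add, sub_eq_add_neg]
  rw [phi_cq, phi_cq_qj]

lemma cmap_mul_jmul {m n p : ℕ} (M : Matrix (Fin m) (Fin n) ℂ) (N : Matrix (Fin n) (Fin p) ℂ) :
    cmap M * jmul (cmap N) = jmul (cmap (M * N)) := by
  refine Matrix.ext fun i k => ?_
  simp only [jmul, Matrix.map_apply, cmap_mul, Matrix.mul_apply, Finset.sum_mul, mul_assoc]

lemma jmul_mul_cmap {m n p : ℕ} (M : Matrix (Fin m) (Fin n) ℂ) (N : Matrix (Fin n) (Fin p) ℂ) :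
    jmul (cmap M) * cmap N = jmul (cmap (M * N.map (starRingEnd ℂ))) := by
  refine Matrix.ext fun i k => ?_
  simp only [jmul, Matrix.map_apply, cmap, Matrix.mul_apply]
  rw [show cq = ⇑cqHom from rfl, map_sum, Finset.sum_mul]
  exact Finset.sum_congr rfl fun j _ => cq_qj_mul_cq (M i j) (N j k)

lemma entry_inj (z w z' w' : ℂ) (h : cq z + cq w * qj = cq z' + cq w' * qj) :
    z = z' ∧ w = w' := by
  have h1 := congrArg QuaternionAlgebra.re h
  have h2 := congrArg QuaternionAlgebra.imI h
  have h3 := congrArg QuaternionAlgebra.imJ h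
  have h4 := congrArg QuaternionAlgebra.imK h
  simp only [Quaternion.re_add, Quaternion.imI_add, Quaternion.imJ_add, Quaternion.imK_add, Quaternion.re_sub, Quaternion.imI_sub, Quaternion.imJ_sub, Quaternion.imK_sub, Quaternion.re_mul, Quaternion.imI_mul, Quaternion.imJ_mul, Quaternion.imK_mul, Quaternion.re_neg, Quaternion.imI_neg, Quaternion.imJ_neg, Quaternion.imK_neg] at h1 h2 h3 h4
  simp [cq, qj] at h1 h2 h3 h4
  exact ⟨Complex.ext h1 h2, Complex.ext h3 h4⟩

lemma split_inj {m n : ℕ} (P Q P' Q' : Matrix (Fin m) (Fin n) ℂ)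
    (h : cmap P + jmul (cmap Q) = cmap P' + jmul (cmap Q')) : P = P' ∧ Q = Q' := by
  have key : ∀ i k, P i k = P' i k ∧ Q i k = Q' i k := by
    intro i k
    have := congrFun (congrFun h i) k
    simp only [cmap, jmul, Matrix.add_apply, Matrix.map_apply] at this
    exact entry_inj _ _ _ _ this
  exact ⟨Matrix.ext fun i k => (key i k).1, Matrix.ext fun i k => (key i k).2⟩

theorem stein_type_split {m n : ℕ}
    (A : Matrix (Fin m) (Fin m) ℂ) (B : Matrix (Fin n) (Fin n) ℂ)
    (C₁ C₂ X₁ X₂ : Matrix (Fin m) (Fin n) ℂ) :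
    ((cmap X₁ + jmul (cmap X₂)) -
        cmap A * phiM (cmap X₁ + jmul (cmap X₂)) * cmap B =
      cmap C₁ + jmul (cmap C₂)) ↔
    (X₁ - A * X₁ * B = C₁ ∧ X₂ + A * X₂ * B.map (starRingEnd ℂ) = C₂) := by
  have key : (cmap X₁ + jmul (cmap X₂)) -
      cmap A * phiM (cmap X₁ + jmul (cmap X₂)) * cmap B =
      cmap (X₁ - A * X₁ * B) + jmul (cmap (X₂ + A * X₂ * B.map (starRingEnd ℂ))) := by
    rw [phiM_split, Matrix.mul_sub, Matrix.sub_mul, cmap_mul_jmul, jmul_mul_cmap,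
      ← cmap_mul, ← cmap_mul]
    have h1 : cmap (X₁ - A * X₁ * B) = cmap X₁ - cmap (A * X₁ * B) := by
      refine Matrix.ext fun i k => ?_
      simp [cmap, Matrix.map_apply, Matrix.sub_apply, cq_sub]
    have h2 : jmul (cmap (X₂ + A * X₂ * B.map (starRingEnd ℂ))) =
        jmul (cmap X₂) + jmul (cmap (A * X₂ * B.map (starRingEnd ℂ))) := by
      refine Matrix.ext fun i k => ?_
      simp [cmap, jmul, Matrix.map_apply, Matrix.add_apply, cq_add, add_mul]
    rw [h1, h2]
    abel
  rw [key]
  constructor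
  · intro h
    exact split_inj _ _ _ _ h
  · rintro ⟨h1, h2⟩
    rw [h1, h2]
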